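/- Let k be an integer with 1 ≤ k ≤ n(q-1) such that k is not congruent to 0 modulo q-1, and let ℓ = n(q-1) − k. Then the dual code of C_{n,k}^q equals C_{n,ℓ}^q. -/

import Mathlib

open scoped BigOperators

/-- A vector in `F^(n+1)` is a standard representative if its leftmost nonzero
coordinate equals `1`. -/
def IsStdRep {F : Type*} [Field F] {n : ℕ} (v : Fin (n + 1) → F) : Prop :=
  ∃ i, (∀ j, j < i → v j = 0) ∧ v i = 1

/-- The set of standard affine representatives of the points of projective n-space. -/
abbrev ProjPts (F : Type*) [Field F] (n : ℕ) : Type _ :=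
  {v : Fin (n + 1) → F // IsStdRep v}

noncomputable instance {F : Type*} [Field F] [Fintype F] {n : ℕ} :
    Fintype (ProjPts F n) := Fintype.ofFinite _

/-- Evaluation of a polynomial at the standard representatives, as a linear map. -/
noncomputable def evalOnPts (F : Type*) [Field F] [Fintype F] (n : ℕ) :
    MvPolynomial (Fin (n + 1)) F →ₗ[F] (ProjPts F n → F) where
  toFun f := fun p => MvPolynomial.eval p.1 f
  map_add' f g := by ext p; simp
  map_smul' c f := by ext p; simp [MvPolynomial.smul_eval]

/-- The projective Reed–Muller code `C_{n,k}^q`: evaluations of homogeneous degree-`k`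
polynomials at the standard representatives of the points of `ℙ^n(F)`. -/
noncomputable def PRM (F : Type*) [Field F] [Fintype F] (n k : ℕ) :
    Submodule F (ProjPts F n → F) :=
  Submodule.map (evalOnPts F n) (MvPolynomial.homogeneousSubmodule (Fin (n + 1)) F k)

/-- The dual code with respect to the standard bilinear form. -/
noncomputable def dualCode {F : Type*} [Field F] [Fintype F] {n : ℕ}
    (C : Submodule F (ProjPts F n → F)) : Submodule F (ProjPts F n → F) where
  carrier := {y | ∀ c ∈ C, ∑ p : ProjPts F n, y p * c p = 0}
  zero_mem' := by intro c hc; simp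
  add_mem' := by
    intro a b ha hb c hc
    show ∑ p : ProjPts F n, (a + b) p * c p = 0
    simp only [Pi.add_apply, add_mul, Finset.sum_add_distrib, ha c hc, hb c hc, add_zero]
  smul_mem' := by
    intro r a ha c hc
    show ∑ p : ProjPts F n, (r • a) p * c p = 0
    simp only [Pi.smul_apply, smul_eq_mul, mul_assoc, ← Finset.mul_sum, ha c hc, mul_zero]

set_option linter.unusedSectionVars false


namespace PRMAux

open MvPolynomial Finset Module

variable {F : Type*} [Field F] [Fintype F] [DecidableEq F] {n : ℕ}

lemma one_le_r : 1 ≤ Fintype.card F - 1 := by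
  have := Fintype.one_lt_card (α := F); omega

lemma pow_mod_card (a : F) (ha : a ≠ 0) (s : ℕ) :
    a ^ s = a ^ (s % (Fintype.card F - 1)) := by
  conv_lhs => rw [← Nat.div_add_mod s (Fintype.card F - 1)]
  rw [pow_add, pow_mul, FiniteField.pow_card_sub_one_eq_one a ha, one_pow, one_mul]

lemma pow_congr_of_mod (a : F) (ha : a ≠ 0) {s t : ℕ}
    (h : s % (Fintype.card F - 1) = t % (Fintype.card F - 1)) : a ^ s = a ^ t := by
  rw [pow_mod_card a ha s, pow_mod_card a ha t, h]

lemma mod_eq_of_forall_pow {s t : ℕ} (h : ∀ a : F, a ≠ 0 → a ^ s = a ^ t) :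
    s % (Fintype.card F - 1) = t % (Fintype.card F - 1) := by
  obtain ⟨g, hg⟩ := IsCyclic.exists_generator (α := Fˣ)
  have hord : orderOf g = Fintype.card F - 1 := by
    rw [orderOf_eq_card_of_forall_mem_zpowers hg, Nat.card_eq_fintype_card, Fintype.card_units]
  have hu : g ^ s = g ^ t := by
    ext
    push_cast
    exact h g.val (Units.ne_zero g)
  have := pow_eq_pow_iff_modEq.mp hu
  rwa [hord] at this

lemma sum_pow_eq_zero' (m : ℕ) (hm : m = 0 ∨ ¬ (Fintype.card F - 1) ∣ m) :
    ∑ x : F, x ^ m = 0 := by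
  rcases hm with rfl | hm
  · simp only [pow_zero, Finset.sum_const, Finset.card_univ, nsmul_eq_mul, mul_one]
    exact FiniteField.cast_card_eq_zero F
  · have hm0 : m ≠ 0 := by rintro rfl; exact hm (dvd_zero _)
    let φ : Fˣ ↪ F := ⟨fun x ↦ x, fun _ _ h => Units.ext h⟩
    have huniv : univ.map φ = univ \ {0} := by
      ext x
      simp only [mem_map, mem_univ, Function.Embedding.coeFn_mk, true_and, mem_sdiff,
        mem_singleton, φ]
      exact isUnit_iff_ne_zero
    calc
      ∑ x : F, x ^ m = ∑ x ∈ univ \ {(0 : F)}, x ^ m := by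
        rw [← Finset.sum_sdiff ({0} : Finset F).subset_univ, Finset.sum_singleton,
          zero_pow hm0, add_zero]
      _ = ∑ x : Fˣ, (x : F) ^ m := by rw [← huniv, Finset.sum_map]; rfl
      _ = 0 := by rw [FiniteField.sum_pow_units F m, if_neg hm]

lemma isStdRep_ne_zero {v : Fin (n + 1) → F} (h : IsStdRep v) : v ≠ 0 := by
  obtain ⟨i, -, hi⟩ := h
  intro h0
  rw [h0] at hi
  simp at hi

lemma exists_std_index (v : Fin (n + 1) → F) (hv : v ≠ 0) :
    ∃ i, v i ≠ 0 ∧ ∀ j, j < i → v j = 0 := by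
  classical
  have hex : ∃ i, v i ≠ 0 := by
    by_contra h
    push_neg at h
    exact hv (funext fun i => h i)
  have hs : (univ.filter fun i => v i ≠ 0).Nonempty := by
    obtain ⟨i, hi⟩ := hex
    exact ⟨i, mem_filter.mpr ⟨mem_univ _, hi⟩⟩
  refine ⟨(univ.filter fun i => v i ≠ 0).min' hs, ?_, ?_⟩
  · exact (mem_filter.mp (Finset.min'_mem _ hs)).2
  · intro j hj
    by_contra hvj
    exact absurd (Finset.min'_le _ j (mem_filter.mpr ⟨mem_univ _, hvj⟩)) (not_le.mpr hj)

lemma exists_unique_norm (v : Fin (n + 1) → F) (hv : v ≠ 0) :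
    ∃! cp : Fˣ × ProjPts F n, ((cp.1 : F) • cp.2.1) = v := by
  obtain ⟨i₀, hi₀, hlt⟩ := exists_std_index v hv
  refine ⟨⟨Units.mk0 (v i₀) hi₀, ⟨(v i₀)⁻¹ • v,
      ⟨i₀, fun j hj => by simp [hlt j hj], by simp [inv_mul_cancel₀ hi₀]⟩⟩⟩, ?_, ?_⟩
  · show (v i₀) • ((v i₀)⁻¹ • v) = v
    rw [smul_smul, mul_inv_cancel₀ hi₀, one_smul]
  · rintro ⟨c, p⟩ hcp
    obtain ⟨i, hz, ho⟩ := p.2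
    have hvi : v i = c := by rw [← hcp]; simp [ho]
    have hvz : ∀ j, j < i → v j = 0 := by
      intro j hj; rw [← hcp]; simp [hz j hj]
    have hii : i = i₀ := by
      rcases lt_trichotomy i i₀ with h | h | h
    -- i < i₀ : v i = 0 but v i = c ≠ 0
      · exact absurd (hlt i h) (by rw [hvi]; exact Units.ne_zero c)
      · exact h
      · exact absurd (hvz i₀ h) hi₀
    have hvic : v i₀ = (c : F) := hii ▸ hvi
    change (c : F) • p.1 = v at hcp
    have hc : c = Units.mk0 (v i₀) hi₀ := by
      ext
      simp only [Units.val_mk0]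
      exact hvic.symm
    refine Prod.ext hc (Subtype.ext ?_)
    show p.1 = (v i₀)⁻¹ • v
    rw [hvic, ← hcp, smul_smul, inv_mul_cancel₀ (Units.ne_zero c), one_smul]

noncomputable def normEquiv (F : Type*) [Field F] [Fintype F] [DecidableEq F] (n : ℕ) :
    Fˣ × ProjPts F n ≃ {v : Fin (n + 1) → F // v ≠ 0} :=
  Equiv.ofBijective
    (fun cp => ⟨(cp.1 : F) • cp.2.1,
      smul_ne_zero (Units.ne_zero cp.1) (isStdRep_ne_zero cp.2.2)⟩)
    ⟨by
      intro cp1 cp2 h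
      have h' : (cp1.1 : F) • cp1.2.1 = (cp2.1 : F) • cp2.2.1 := congrArg Subtype.val h
      have hv : ((cp2.1 : F) • cp2.2.1) ≠ 0 :=
        smul_ne_zero (Units.ne_zero cp2.1) (isStdRep_ne_zero cp2.2.2)
      obtain ⟨cp, -, huniq⟩ := exists_unique_norm ((cp2.1 : F) • cp2.2.1) hv
      exact (huniq cp1 h').trans (huniq cp2 rfl).symm,
     by
      rintro ⟨v, hv⟩
      obtain ⟨cp, hcp, -⟩ := exists_unique_norm v hv
      exact ⟨cp, Subtype.ext hcp⟩⟩

lemma normEquiv_apply (cp : Fˣ × ProjPts F n) :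
    ((normEquiv F n cp : {v : Fin (n + 1) → F // v ≠ 0}) : Fin (n + 1) → F)
      = (cp.1 : F) • cp.2.1 := rfl

lemma sum_decompose (f : (Fin (n + 1) → F) → F) :
    ∑ v : Fin (n + 1) → F, f v
      = f 0 + ∑ cp : Fˣ × ProjPts F n, f ((cp.1 : F) • cp.2.1) := by
  classical
  have h1 : ∑ cp : Fˣ × ProjPts F n, f ((cp.1 : F) • cp.2.1)
      = ∑ v : {v : Fin (n + 1) → F // v ≠ 0}, f v.1 := by
    rw [← Equiv.sum_comp (normEquiv F n) (fun v : {v : Fin (n + 1) → F // v ≠ 0} => f v.1)]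
    rfl
  have h2 : ∑ v : {v : Fin (n + 1) → F // v ≠ 0}, f v.1
      = ∑ v ∈ (univ : Finset (Fin (n + 1) → F)).erase 0, f v := by
    rw [Finset.sum_subtype ((univ : Finset (Fin (n + 1) → F)).erase 0)
      (p := fun v => v ≠ 0) (by simp) f]
  rw [h1, h2, Finset.add_sum_erase _ f (mem_univ 0)]

end PRMAux

namespace PRMAux

open MvPolynomial Finset Module

variable {F : Type*} [Field F] [Fintype F] [DecidableEq F] {n : ℕ}

lemma degree_eq_sum_univ (a : Fin (n + 1) →₀ ℕ) : a.degree = ∑ j, a j := by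
  unfold Finsupp.degree
  exact Finset.sum_subset (Finset.subset_univ _)
    (fun x _ hx => Finsupp.notMem_support_iff.mp hx)

lemma degree_of_mem_support {f : MvPolynomial (Fin (n + 1)) F} {d : ℕ}
    (hf : f.IsHomogeneous d) {b : Fin (n + 1) →₀ ℕ} (hb : b ∈ f.support) :
    ∑ j, b j = d := by
  rw [← degree_eq_sum_univ, Finsupp.degree_eq_weight_one]
  exact hf (mem_support_iff.mp hb)

lemma eval_smul_eq (P : MvPolynomial (Fin (n + 1)) F) (c : F) (v : Fin (n + 1) → F) :
    eval (c • v) P = ∑ a ∈ P.support, coeff a P * (c ^ (∑ j, a j) * ∏ j, v j ^ a j) := by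
  rw [eval_eq']
  refine Finset.sum_congr rfl fun a _ => ?_
  have h : ∏ j, (c • v) j ^ a j = c ^ (∑ j, a j) * ∏ j, v j ^ a j := by
    rw [← Finset.prod_pow_eq_pow_sum, ← Finset.prod_mul_distrib]
    refine Finset.prod_congr rfl fun j _ => ?_
    simp [mul_pow]
  rw [h]

lemma monomial_mem_restrictDegree {a : Fin (n + 1) →₀ ℕ} (c : F)
    (ha : ∀ j, a j ≤ Fintype.card F - 1) :
    (monomial a c : MvPolynomial (Fin (n + 1)) F)
      ∈ restrictDegree (Fin (n + 1)) F (Fintype.card F - 1) := by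
  rw [mem_restrictDegree]
  intro s hs i
  have hsa : s = a := by
    have := support_monomial_subset hs
    simpa using this
  rw [hsa]
  exact ha i

lemma eval_zero_of_reduced (P : MvPolynomial (Fin (n + 1)) F)
    (h : ∀ v : Fin (n + 1) → F, eval v P = 0)
    (hP : P ∈ restrictDegree (Fin (n + 1)) F (Fintype.card F - 1)) : P = 0 := by
  classical
  set e : Fin (n + 1) ≃ ULift (Fin (n + 1)) := Equiv.ulift.symm with he
  have hinj := MvPolynomial.rename_injective (R := F) (⇑e) e.injective
  apply hinj
  rw [map_zero]
  apply eq_zero_of_eval_eq_zero (σ := ULift (Fin (n + 1))) (K := F)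
  · intro v
    rw [eval_rename]
    exact h _
  · rw [mem_restrictDegree]
    intro s hs i
    rw [mem_restrictDegree] at hP
    have hsupp : (rename (⇑e) P).support = P.support.image (Finsupp.mapDomain ⇑e) := by
      exact MvPolynomial.support_rename_of_injective e.injective
    rw [hsupp, Finset.mem_image] at hs
    obtain ⟨b, hb, rfl⟩ := hs
    have : Finsupp.mapDomain (⇑e) b i = b (e.symm i) := by
      conv_lhs => rw [show i = e (e.symm i) by simp]
      exact Finsupp.mapDomain_apply e.injective b _
    rw [this]
    exact hP b hb _

lemma support_mod_of_class (P : MvPolynomial (Fin (n + 1)) F)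
    (hP : P ∈ restrictDegree (Fin (n + 1)) F (Fintype.card F - 1)) (k : ℕ)
    (hcl : ∀ c : F, c ≠ 0 → ∀ v, eval (c • v) P = c ^ k * eval v P) :
    ∀ a ∈ P.support, (∑ j, a j) % (Fintype.card F - 1) = k % (Fintype.card F - 1) := by
  intro a ha
  apply mod_eq_of_forall_pow
  intro c hc
  set Q : MvPolynomial (Fin (n + 1)) F :=
    ∑ b ∈ P.support, monomial b (c ^ (∑ j, b j) * coeff b P) with hQdef
  have hQcoeff : ∀ b, coeff b Q = c ^ (∑ j, b j) * coeff b P := by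
    intro b
    rw [hQdef, coeff_sum]
    rw [Finset.sum_eq_single b]
    · rw [coeff_monomial, if_pos rfl]
    · intro b' _ hb'
      rw [coeff_monomial, if_neg hb']
    · intro hb
      rw [coeff_monomial, if_pos rfl, notMem_support_iff.mp hb, mul_zero]
  have hQmem : Q ∈ restrictDegree (Fin (n + 1)) F (Fintype.card F - 1) := by
    apply Submodule.sum_mem
    intro b hb
    rw [mem_restrictDegree] at hP
    exact monomial_mem_restrictDegree _ (fun i => hP b hb i)
  have hev : ∀ v, eval v (Q - c ^ k • P) = 0 := by
    intro v
    rw [map_sub, smul_eval]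
    have hQe : eval v Q = eval (c • v) P := by
      rw [eval_smul_eq P c v, hQdef, map_sum]
      refine Finset.sum_congr rfl fun b _ => ?_
      rw [eval_monomial, Finsupp.prod_fintype]
      · ring
      · intro j; exact pow_zero _
    rw [hQe, hcl c hc v]
    ring
  have heq : Q = c ^ k • P := by
    rw [← sub_eq_zero]
    exact eval_zero_of_reduced _ hev
      (Submodule.sub_mem _ hQmem (Submodule.smul_mem _ _ hP))
  have hco := congrArg (coeff a) heq
  rw [hQcoeff, coeff_smul, smul_eq_mul] at hco
  exact mul_right_cancel₀ (mem_support_iff.mp ha) hco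

/-- exponent reduction -/
def redExp (m e : ℕ) : ℕ := if e = 0 then 0 else (e - 1) % m + 1

lemma redExp_zero (m : ℕ) : redExp m 0 = 0 := rfl

lemma redExp_le (m e : ℕ) (hm : 1 ≤ m) : redExp m e ≤ m := by
  unfold redExp
  split
  · omega
  · have := Nat.mod_lt (e - 1) (show 0 < m by omega)
    omega

lemma redExp_le_self (m e : ℕ) : redExp m e ≤ e := by
  unfold redExp
  split
  · omega
  · have := Nat.mod_le (e - 1) m
    omega

lemma redExp_pos {m e : ℕ} (he : e ≠ 0) : 0 < redExp m e := by
  unfold redExp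
  split
  · omega
  · omega

lemma redExp_mod (m e : ℕ) : redExp m e % m = e % m := by
  rcases Nat.eq_zero_or_pos e with rfl | he
  · rfl
  have h : redExp m e + m * ((e - 1) / m) = e := by
    unfold redExp
    rw [if_neg (by omega)]
    have := Nat.mod_add_div (e - 1) m
    omega
  conv_rhs => rw [← h]
  rw [Nat.add_mul_mod_self_left]

lemma pow_redExp (a : F) (e : ℕ) : a ^ redExp (Fintype.card F - 1) e = a ^ e := by
  rcases Nat.eq_zero_or_pos e with rfl | he
  · rfl
  rcases eq_or_ne a 0 with rfl | ha
  · rw [zero_pow he.ne', zero_pow (redExp_pos he.ne').ne']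
  · exact pow_congr_of_mod a ha (redExp_mod _ e)

lemma exists_reduction (f : MvPolynomial (Fin (n + 1)) F) :
    ∃ P : MvPolynomial (Fin (n + 1)) F,
      (∀ v, eval v P = eval v f) ∧
      P ∈ restrictDegree (Fin (n + 1)) F (Fintype.card F - 1) ∧
      ∀ a ∈ P.support, ∃ b ∈ f.support,
        ∀ j, a j = redExp (Fintype.card F - 1) (b j) := by
  classical
  set ρ : (Fin (n + 1) →₀ ℕ) → (Fin (n + 1) →₀ ℕ) :=
    fun b => Finsupp.mapRange (redExp (Fintype.card F - 1)) (redExp_zero _) b with hρ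
  have hρ_apply : ∀ b j, ρ b j = redExp (Fintype.card F - 1) (b j) := by
    intro b j; rw [hρ]; exact Finsupp.mapRange_apply
  refine ⟨∑ b ∈ f.support, monomial (ρ b) (coeff b f), ?_, ?_, ?_⟩
  · intro v
    rw [map_sum, eval_eq' v f]
    refine Finset.sum_congr rfl fun b _ => ?_
    rw [eval_monomial, Finsupp.prod_fintype]
    · congr 1
      refine Finset.prod_congr rfl fun j _ => ?_
      rw [hρ_apply, pow_redExp]
    · intro j; exact pow_zero _
  · apply Submodule.sum_mem
    intro b _
    refine monomial_mem_restrictDegree _ (fun j => ?_)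
    rw [hρ_apply]
    exact redExp_le _ _ one_le_r
  · intro a ha
    have := MvPolynomial.support_sum ha
    rw [Finset.mem_biUnion] at this
    obtain ⟨b, hb, hab⟩ := this
    refine ⟨b, hb, fun j => ?_⟩
    have hsa : a = ρ b := by
      have := support_monomial_subset hab
      simpa using this
    rw [hsa, hρ_apply]

end PRMAux

namespace PRMAux

open MvPolynomial Finset Module

variable {F : Type*} [Field F] [Fintype F] [DecidableEq F] {n : ℕ}

variable (F n) in
/-- all exponent vectors with entries `≤ q - 1` -/
noncomputable def box : Finset (Fin (n + 1) →₀ ℕ) :=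
  (Fintype.piFinset fun _ : Fin (n + 1) => Finset.range (Fintype.card F)).image
    fun g => Finsupp.equivFunOnFinite.symm g

lemma mem_box {a : Fin (n + 1) →₀ ℕ} :
    a ∈ box F n ↔ ∀ j, a j ≤ Fintype.card F - 1 := by
  have hcard : 1 ≤ Fintype.card F := Fintype.card_pos
  unfold box
  constructor
  · intro ha
    rw [Finset.mem_image] at ha
    obtain ⟨g, hg, rfl⟩ := ha
    rw [Fintype.mem_piFinset] at hg
    intro j
    have := hg j
    rw [Finset.mem_range] at this
    have happ : (Finsupp.equivFunOnFinite.symm g) j = g j := rfl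
    rw [happ]
    omega
  · intro ha
    rw [Finset.mem_image]
    refine ⟨⇑a, ?_, ?_⟩
    · rw [Fintype.mem_piFinset]
      intro j
      rw [Finset.mem_range]
      have := ha j
      omega
    · exact Finsupp.equivFunOnFinite_symm_coe a

variable (F n) in
/-- admissible exponents for degree `d` -/
noncomputable def admSet (d : ℕ) : Finset (Fin (n + 1) →₀ ℕ) :=
  (box F n).filter fun a =>
    (∑ j, a j) % (Fintype.card F - 1) = d % (Fintype.card F - 1)
      ∧ 0 < ∑ j, a j ∧ ∑ j, a j ≤ d

lemma mem_admSet {d : ℕ} {a : Fin (n + 1) →₀ ℕ} :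
    a ∈ admSet F n d ↔ (∀ j, a j ≤ Fintype.card F - 1) ∧
      (∑ j, a j) % (Fintype.card F - 1) = d % (Fintype.card F - 1)
      ∧ 0 < ∑ j, a j ∧ ∑ j, a j ≤ d := by
  unfold admSet
  rw [Finset.mem_filter, mem_box]

variable (F n) in
/-- the subspace of polynomials supported on admissible monomials -/
noncomputable def W (d : ℕ) : Submodule F (MvPolynomial (Fin (n + 1)) F) where
  carrier := {P | ∀ a ∈ P.support, a ∈ admSet F n d}
  zero_mem' := by intro a ha; simp at ha
  add_mem' := by
    intro P Q hP hQ a ha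
    rcases Finset.mem_union.mp (MvPolynomial.support_add ha) with h | h
    · exact hP a h
    · exact hQ a h
  smul_mem' := by
    intro c P hP a ha
    exact hP a (MvPolynomial.support_smul ha)

lemma mem_W {d : ℕ} {P : MvPolynomial (Fin (n + 1)) F} :
    P ∈ W F n d ↔ ∀ a ∈ P.support, a ∈ admSet F n d := Iff.rfl

lemma W_le_restrictDegree (d : ℕ) :
    W F n d ≤ restrictDegree (Fin (n + 1)) F (Fintype.card F - 1) := by
  intro P hP
  rw [mem_restrictDegree]
  intro s hs i
  exact (mem_admSet.mp (hP s hs)).1 i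

lemma W_eq_span (d : ℕ) :
    W F n d = Submodule.span F ((fun a => (monomial a (1 : F))) '' (admSet F n d)) := by
  apply le_antisymm
  · intro P hP
    rw [← support_sum_monomial_coeff P]
    apply Submodule.sum_mem
    intro a ha
    have hmono : (monomial a (coeff a P) : MvPolynomial (Fin (n + 1)) F)
        = (coeff a P) • monomial a (1 : F) := by
      rw [smul_monomial, smul_eq_mul, mul_one]
    rw [hmono]
    exact Submodule.smul_mem _ _ (Submodule.subset_span ⟨a, hP a ha, rfl⟩)
  · rw [Submodule.span_le]
    rintro _ ⟨a, ha, rfl⟩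
    intro s hs
    have : s = a := by simpa using support_monomial_subset hs
    rwa [this]

lemma finiteDimensional_W (d : ℕ) : FiniteDimensional F (W F n d) := by
  rw [W_eq_span]
  exact FiniteDimensional.span_of_finite F ((admSet F n d).finite_toSet.image _)

lemma finrank_W (d : ℕ) : finrank F (W F n d) = (admSet F n d).card := by
  classical
  rw [W_eq_span]
  have hli : LinearIndependent F
      (fun a : (admSet F n d : Finset (Fin (n + 1) →₀ ℕ)) =>
        (monomial (a : Fin (n + 1) →₀ ℕ) (1 : F) : MvPolynomial (Fin (n + 1)) F)) := by
    have h1 := (basisMonomials (Fin (n + 1)) F).linearIndependent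
    rw [coe_basisMonomials] at h1
    exact h1.comp Subtype.val Subtype.val_injective
  have h2 := finrank_span_eq_card hli
  rw [Set.image_eq_range (fun a => (monomial a (1 : F)) : (Fin (n + 1) →₀ ℕ) → MvPolynomial (Fin (n + 1)) F) (admSet F n d : Set (Fin (n + 1) →₀ ℕ))]
  rw [Fintype.card_coe] at h2
  exact h2

end PRMAux

namespace PRMAux

open MvPolynomial Finset Module

variable {F : Type*} [Field F] [Fintype F] [DecidableEq F] {n : ℕ}

lemma exists_pos_exp {a : Fin (n + 1) →₀ ℕ} (h : 0 < ∑ j, a j) : ∃ j, a j ≠ 0 := by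
  by_contra hcon
  push_neg at hcon
  have hz : ∑ j, a j = 0 := Finset.sum_eq_zero fun j _ => hcon j
  omega

lemma eval_zero_of_pos_degs {P : MvPolynomial (Fin (n + 1)) F}
    (h : ∀ a ∈ P.support, 0 < ∑ j, a j) : eval (0 : Fin (n + 1) → F) P = 0 := by
  rw [eval_eq']
  apply Finset.sum_eq_zero
  intro a ha
  obtain ⟨j, hj⟩ := exists_pos_exp (h a ha)
  rw [Finset.prod_eq_zero (Finset.mem_univ j) (by simp [zero_pow hj]), mul_zero]

lemma evalOnPts_eq_zero_of_W {d : ℕ} {P : MvPolynomial (Fin (n + 1)) F}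
    (hP : P ∈ W F n d) (h0 : evalOnPts F n P = 0) : P = 0 := by
  apply eval_zero_of_reduced _ _ (W_le_restrictDegree d hP)
  intro v
  rcases eq_or_ne v 0 with rfl | hv
  · exact eval_zero_of_pos_degs fun a ha => (mem_admSet.mp (hP a ha)).2.2.1
  · obtain ⟨⟨c, p⟩, hcp, -⟩ := exists_unique_norm v hv
    rw [← hcp]
    rw [eval_smul_eq]
    have hpz : eval p.1 P = 0 := by
      have := congrFun h0 p
      simpa [evalOnPts] using this
    rw [eval_eq'] at hpz
    calc ∑ a ∈ P.support, coeff a P * ((c : F) ^ (∑ j, a j) * ∏ j, (p.1) j ^ a j)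
        = ∑ a ∈ P.support, (c : F) ^ (d % (Fintype.card F - 1))
            * (coeff a P * ∏ j, (p.1) j ^ a j) := by
          refine Finset.sum_congr rfl fun a ha => ?_
          have hmod : (∑ j, a j) % (Fintype.card F - 1) = d % (Fintype.card F - 1) :=
            (mem_admSet.mp (hP a ha)).2.1
          have : (c : F) ^ (∑ j, a j) = (c : F) ^ (d % (Fintype.card F - 1)) := by
            rw [pow_mod_card _ (Units.ne_zero c), hmod, ← pow_mod_card _ (Units.ne_zero c)]
          rw [this]; ring
      _ = (c : F) ^ (d % (Fintype.card F - 1)) * ∑ a ∈ P.support, coeff a P * ∏ j, (p.1) j ^ a j := by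
          rw [Finset.mul_sum]
      _ = 0 := by rw [hpz, mul_zero]

end PRMAux

namespace PRMAux

open MvPolynomial Finset Module

variable {F : Type*} [Field F] [Fintype F] [DecidableEq F] {n : ℕ}

lemma sum_univ_add_single (a : Fin (n + 1) →₀ ℕ) (j : Fin (n + 1)) (e : ℕ) :
    ∑ i, (a + Finsupp.single j e) i = (∑ i, a i) + e := by
  have h1 : ∀ i, (a + Finsupp.single j e) i = a i + Finsupp.single j e i := by
    intro i; rfl
  simp only [h1]
  rw [Finset.sum_add_distrib]
  congr 1
  simp [Finsupp.single_apply]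

lemma evalOnPts_monomial_bump (a : Fin (n + 1) →₀ ℕ) (c : F) (j : Fin (n + 1))
    (hj : a j ≠ 0) (e : ℕ) (he : (Fintype.card F - 1) ∣ e) :
    evalOnPts F n (monomial (a + Finsupp.single j e) c) = evalOnPts F n (monomial a c) := by
  funext p
  show eval p.1 _ = eval p.1 _
  rw [eval_monomial, eval_monomial]
  congr 1
  rw [Finsupp.prod_fintype _ _ (fun i => pow_zero _),
    Finsupp.prod_fintype _ _ (fun i => pow_zero _)]
  rcases eq_or_ne (p.1 j) 0 with hpj | hpj
  · rw [Finset.prod_eq_zero (mem_univ j), Finset.prod_eq_zero (mem_univ j)]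
    · rw [hpj]; exact zero_pow hj
    · rw [hpj]
      apply zero_pow
      have : (a + Finsupp.single j e) j = a j + e := by
        rw [Finsupp.add_apply, Finsupp.single_eq_same]
      omega
  · refine Finset.prod_congr rfl fun i _ => ?_
    rcases eq_or_ne i j with rfl | hij
    · rw [Finsupp.add_apply, Finsupp.single_eq_same, pow_add]
      have h1 : p.1 i ^ e = 1 := by
        obtain ⟨t, rfl⟩ := he
        rw [pow_mod_card _ hpj, Nat.mul_mod_right, pow_zero]
      rw [h1, mul_one]
    · rw [Finsupp.add_apply, Finsupp.single_eq_of_ne' (Ne.symm hij), add_zero]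

lemma map_W_le_PRM (d : ℕ) :
    Submodule.map (evalOnPts F n) (W F n d) ≤ PRM F n d := by
  rintro _ ⟨P, hP, rfl⟩
  rw [← support_sum_monomial_coeff P, map_sum]
  apply Submodule.sum_mem
  intro a ha
  obtain ⟨hbox, hmod, hpos, hle⟩ := mem_admSet.mp (hP a ha)
  obtain ⟨j, hj⟩ := exists_pos_exp hpos
  have hdvd : (Fintype.card F - 1) ∣ (d - ∑ i, a i) :=
    (Nat.modEq_iff_dvd' hle).mp hmod
  refine ⟨monomial (a + Finsupp.single j (d - ∑ i, a i)) (coeff a P), ?_, ?_⟩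
  · show (monomial (a + Finsupp.single j (d - ∑ i, a i)) (coeff a P)).IsHomogeneous d
    apply isHomogeneous_monomial
    rw [degree_eq_sum_univ, sum_univ_add_single]
    omega
  · exact evalOnPts_monomial_bump a _ j hj _ hdvd

lemma PRM_le_map_W {d : ℕ} (hd : d % (Fintype.card F - 1) ≠ 0) :
    PRM F n d ≤ Submodule.map (evalOnPts F n) (W F n d) := by
  rintro _ ⟨f, hf, rfl⟩
  have hf' : f.IsHomogeneous d := hf
  obtain ⟨P, hev, hred, hsupp⟩ := exists_reduction f
  refine ⟨P, ?_, ?_⟩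
  · intro a ha
    obtain ⟨b, hb, hab⟩ := hsupp a ha
    have hbdeg : ∑ j, b j = d := degree_of_mem_support hf' hb
    rw [mem_admSet]
    refine ⟨fun j => ?_, ?_, ?_, ?_⟩
    · rw [hab j]; exact redExp_le _ _ one_le_r
    · have h1 : (∑ j, a j) % (Fintype.card F - 1) = (∑ j, b j) % (Fintype.card F - 1) := by
        rw [Finset.sum_nat_mod, Finset.sum_nat_mod (f := fun j => b j)]
        congr 1
        refine Finset.sum_congr rfl fun j _ => ?_
        rw [hab j, redExp_mod]
      rw [h1, hbdeg]
    · have h1 : (∑ j, a j) % (Fintype.card F - 1) = d % (Fintype.card F - 1) := by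
        have h2 : (∑ j, a j) % (Fintype.card F - 1) = (∑ j, b j) % (Fintype.card F - 1) := by
          rw [Finset.sum_nat_mod, Finset.sum_nat_mod (f := fun j => b j)]
          congr 1
          refine Finset.sum_congr rfl fun j _ => ?_
          rw [hab j, redExp_mod]
        rw [h2, hbdeg]
      by_contra hz
      push_neg at hz
      rw [Nat.le_zero.mp hz, Nat.zero_mod] at h1
      exact hd h1.symm
    · calc ∑ j, a j ≤ ∑ j, b j :=
            Finset.sum_le_sum fun j _ => by rw [hab j]; exact redExp_le_self _ _
        _ = d := hbdeg
  · funext p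
    show eval p.1 P = eval p.1 f
    exact hev p.1

lemma PRM_eq_map_W {d : ℕ} (hd : d % (Fintype.card F - 1) ≠ 0) :
    PRM F n d = Submodule.map (evalOnPts F n) (W F n d) :=
  le_antisymm (PRM_le_map_W hd) (map_W_le_PRM d)

lemma finrank_map_W (d : ℕ) :
    finrank F (Submodule.map (evalOnPts F n) (W F n d)) = (admSet F n d).card := by
  haveI := finiteDimensional_W (F := F) (n := n) d
  set g : W F n d →ₗ[F] (ProjPts F n → F) := (evalOnPts F n).comp (W F n d).subtype with hg
  have hker : LinearMap.ker g = ⊥ := by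
    rw [LinearMap.ker_eq_bot']
    intro m hm
    have : (m : MvPolynomial (Fin (n + 1)) F) = 0 :=
      evalOnPts_eq_zero_of_W m.2 hm
    exact Subtype.ext this
  have hrange : LinearMap.range g = Submodule.map (evalOnPts F n) (W F n d) := by
    rw [hg, LinearMap.range_comp, Submodule.range_subtype]
  rw [← hrange, LinearMap.finrank_range_of_inj (LinearMap.ker_eq_bot.mp hker), finrank_W]

end PRMAux

namespace PRMAux

open MvPolynomial Finset Module

variable {F : Type*} [Field F] [Fintype F] [DecidableEq F] {n : ℕ}

lemma sum_eval_proj_eq_zero (hn : 1 ≤ n) (h : MvPolynomial (Fin (n + 1)) F)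
    (hh : h.IsHomogeneous (n * (Fintype.card F - 1))) :
    ∑ p : ProjPts F n, eval p.1 h = 0 := by
  classical
  have hr1 : 1 ≤ Fintype.card F - 1 := one_le_r
  -- total sum over the affine space is zero
  have hA : ∑ v : Fin (n + 1) → F, eval v h = 0 := by
    simp_rw [eval_eq']
    rw [Finset.sum_comm]
    apply Finset.sum_eq_zero
    intro a ha
    rw [← Finset.mul_sum]
    have hswap : ∑ v : Fin (n + 1) → F, ∏ j, v j ^ a j
        = ∏ j, ∑ x : F, x ^ a j := by
      rw [Finset.prod_univ_sum]
      rw [Fintype.piFinset_univ]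
    rw [hswap]
    have hzero : ∃ j, ∑ x : F, x ^ a j = 0 := by
      by_contra hcon
      push_neg at hcon
      have hall : ∀ j, (Fintype.card F - 1) ∣ a j ∧ a j ≠ 0 := by
        intro j
        by_contra hj
        refine hcon j (sum_pow_eq_zero' _ ?_)
        by_cases h0 : a j = 0
        · exact Or.inl h0
        · exact Or.inr fun hdvd => hj ⟨hdvd, h0⟩
      have hdeg : ∑ j, a j = n * (Fintype.card F - 1) := degree_of_mem_support hh ha
      have hbig : (n + 1) * (Fintype.card F - 1) ≤ ∑ j, a j := by
        calc (n + 1) * (Fintype.card F - 1)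
            = ∑ _j : Fin (n + 1), (Fintype.card F - 1) := by
              rw [Finset.sum_const, Finset.card_univ, Fintype.card_fin, smul_eq_mul]
        _ ≤ ∑ j, a j := Finset.sum_le_sum fun j _ =>
              Nat.le_of_dvd (Nat.pos_of_ne_zero (hall j).2) (hall j).1
      have hsucc : (n + 1) * (Fintype.card F - 1)
          = n * (Fintype.card F - 1) + (Fintype.card F - 1) := by ring
      set D := n * (Fintype.card F - 1) with hD
      omega
    obtain ⟨j, hj⟩ := hzero
    rw [Finset.prod_eq_zero (mem_univ j) hj, mul_zero]
  rw [sum_decompose (fun v => eval v h)] at hA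
  have h0 : eval (0 : Fin (n + 1) → F) h = 0 := by
    apply eval_zero_of_pos_degs
    intro a ha
    have hdeg : ∑ j, a j = n * (Fintype.card F - 1) := degree_of_mem_support hh ha
    have : 0 < n * (Fintype.card F - 1) := Nat.mul_pos hn hr1
    omega
  have hscale : ∀ cp : Fˣ × ProjPts F n,
      eval ((cp.1 : F) • cp.2.1) h = eval cp.2.1 h := by
    rintro ⟨c, p⟩
    rw [eval_smul_eq, eval_eq']
    refine Finset.sum_congr rfl fun a ha => ?_
    have hdeg : ∑ j, a j = n * (Fintype.card F - 1) := degree_of_mem_support hh ha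
    have hone : (c : F) ^ (∑ j, a j) = 1 := by
      rw [hdeg, mul_comm, pow_mul, FiniteField.pow_card_sub_one_eq_one _ (Units.ne_zero c),
        one_pow]
    rw [hone, one_mul]
  simp_rw [hscale] at hA
  rw [h0, zero_add, Fintype.sum_prod_type] at hA
  have hA' : ∑ _x : Fˣ, ∑ p : ProjPts F n, eval p.1 h = 0 := hA
  rw [Finset.sum_const, Finset.card_univ, Fintype.card_units] at hA'
  clear hA
  have hA := hA'
  have hcast : ((Fintype.card F - 1 : ℕ) : F) = -1 := by
    have h1 : 1 ≤ Fintype.card F := Fintype.card_pos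
    rw [Nat.cast_sub h1, FiniteField.cast_card_eq_zero, Nat.cast_one, zero_sub]
  rw [nsmul_eq_mul, hcast, neg_one_mul, neg_eq_zero] at hA
  exact hA

lemma PRM_le_dualCode {k l : ℕ} (hn : 1 ≤ n) (hkl : l + k = n * (Fintype.card F - 1)) :
    PRM F n l ≤ dualCode (PRM F n k) := by
  rintro _ ⟨g, hg, rfl⟩
  rintro _ ⟨f, hf, rfl⟩
  have hgf : (g * f).IsHomogeneous (n * (Fintype.card F - 1)) := by
    have := MvPolynomial.IsHomogeneous.mul (show g.IsHomogeneous l from hg)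
      (show f.IsHomogeneous k from hf)
    rwa [hkl] at this
  have := sum_eval_proj_eq_zero hn (g * f) hgf
  calc ∑ p : ProjPts F n, (evalOnPts F n g) p * (evalOnPts F n f) p
      = ∑ p : ProjPts F n, eval p.1 (g * f) := by
        refine Finset.sum_congr rfl fun p _ => ?_
        show eval p.1 g * eval p.1 f = eval p.1 (g * f)
        rw [map_mul]
    _ = 0 := this

lemma finrank_dualCode (C : Submodule F (ProjPts F n → F)) :
    finrank F (dualCode C) + finrank F C = finrank F (ProjPts F n → F) := by
  classical
  let Φ : (ProjPts F n → F) →ₗ[F] Module.Dual F (ProjPts F n → F) :=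
    { toFun := fun y =>
        { toFun := fun x => ∑ p : ProjPts F n, y p * x p
          map_add' := by
            intro x1 x2
            simp only [Pi.add_apply, mul_add]
            rw [Finset.sum_add_distrib]
          map_smul' := by
            intro c x
            simp only [Pi.smul_apply, smul_eq_mul, RingHom.id_apply]
            rw [Finset.mul_sum]
            congr 1
            funext p
            ring }
      map_add' := by
        intro y1 y2
        refine LinearMap.ext fun x => ?_
        show ∑ p : ProjPts F n, (y1 p + y2 p) * x p = _
        simp only [add_mul]
        rw [Finset.sum_add_distrib]
        rfl
      map_smul' := by
        intro c y
        refine LinearMap.ext fun x => ?_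
        show ∑ p : ProjPts F n, (c * y p) * x p = c * ∑ p : ProjPts F n, y p * x p
        rw [Finset.mul_sum]
        congr 1
        funext p
        ring }
  have hΦinj : Function.Injective Φ := by
    intro y1 y2 h
    funext p0
    have h1 := congrArg (fun φ : Module.Dual F (ProjPts F n → F) =>
      φ (Pi.single p0 (1 : F))) h
    simp only [Φ, LinearMap.coe_mk, AddHom.coe_mk] at h1
    have h2 : ∀ y : ProjPts F n → F,
        ∑ p : ProjPts F n, y p * (Pi.single p0 (1 : F) : ProjPts F n → F) p = y p0 := by
      intro y
      rw [Finset.sum_eq_single p0]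
      · rw [Pi.single_eq_same, mul_one]
      · intro b _ hb
        rw [Pi.single_eq_of_ne hb, mul_zero]
      · intro hb
        exact absurd (mem_univ p0) hb
    rw [h2, h2] at h1
    exact h1
  have hΦsurj : Function.Surjective Φ :=
    (LinearMap.injective_iff_surjective_of_finrank_eq_finrank
      (Subspace.dual_finrank_eq).symm).mp hΦinj
  let L := C.dualRestrict.comp Φ
  have hrange : LinearMap.range L = ⊤ :=
    LinearMap.range_eq_top.mpr ((Subspace.dualRestrict_surjective (W := C)).comp hΦsurj)
  have hker : dualCode C = LinearMap.ker L := by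
    ext y
    constructor
    · intro hy
      rw [LinearMap.mem_ker]
      apply LinearMap.ext
      intro c
      exact hy c.1 c.2
    · intro hy c hc
      have := LinearMap.congr_fun (LinearMap.mem_ker.mp hy) ⟨c, hc⟩
      exact this
  have hrn := LinearMap.finrank_range_add_finrank_ker L
  rw [hrange, finrank_top, Subspace.dual_finrank_eq] at hrn
  rw [hker]
  omega

end PRMAux

namespace PRMAux

open MvPolynomial Finset Module

variable {F : Type*} [Field F] [Fintype F] [DecidableEq F] {n : ℕ}

lemma deg_le_dmax {r D s n' : ℕ} (hr : 0 < r) (hD : D ≤ (n' + 1) * r)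
    (hs : D % r = s) (hs0 : s ≠ 0) : D ≤ n' * r + s := by
  have h1 : r * (D / r) + s = D := by rw [← hs]; exact Nat.div_add_mod D r
  have h2 : D / r ≤ n' := by
    by_contra hcon
    push_neg at hcon
    have h3 : r * (n' + 1) ≤ r * (D / r) := Nat.mul_le_mul_left r hcon
    have hD' : D ≤ r * (n' + 1) := by rwa [mul_comm] at hD
    omega
  have h4 : r * (D / r) ≤ r * n' := Nat.mul_le_mul_left r h2
  have h5 : n' * r = r * n' := Nat.mul_comm _ _
  omega

lemma map_W_dmax_eq_top {k : ℕ} (hk0 : k % (Fintype.card F - 1) ≠ 0) :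
    Submodule.map (evalOnPts F n)
      (W F n (n * (Fintype.card F - 1) + k % (Fintype.card F - 1))) = ⊤ := by
  classical
  have hr1 : 1 ≤ Fintype.card F - 1 := one_le_r
  set r := Fintype.card F - 1 with hr_def
  set k0 := k % r with hk0d
  have hk0r : k0 < r := Nat.mod_lt _ (by omega)
  set dmax := n * r + k0 with hdmaxd
  have hdmax_mod : dmax % r = k0 := by
    rw [hdmaxd, mul_comm, Nat.mul_add_mod]
    exact Nat.mod_eq_of_lt hk0r
  rw [eq_top_iff]
  intro y _
  set ytil : (Fin (n + 1) → F) → F := fun v =>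
    if hv : v = 0 then 0
    else (((normEquiv F n).symm ⟨v, hv⟩).1 : F) ^ k * y ((normEquiv F n).symm ⟨v, hv⟩).2
    with hytil
  obtain ⟨P, hPmem, hPev⟩ : ∃ P ∈ restrictDegree (Fin (n + 1)) F r,
      (evalₗ F (Fin (n + 1))) P = ytil := by
    have hmap := map_restrict_dom_evalₗ F (Fin (n + 1))
    have h2 : ytil ∈ Submodule.map (evalₗ F (Fin (n + 1)))
        (restrictDegree (Fin (n + 1)) F r) := by rw [hmap]; trivial
    exact Submodule.mem_map.mp h2
  have hPev' : ∀ v, eval v P = ytil v := fun v => congrFun hPev v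
  have hcl : ∀ c : F, c ≠ 0 → ∀ v, ytil (c • v) = c ^ k * ytil v := by
    intro c hc v
    rcases eq_or_ne v 0 with rfl | hv
    · rw [smul_zero]
      simp only [hytil, dif_pos rfl, mul_zero]
    · have hcv : c • v ≠ 0 := smul_ne_zero hc hv
      have hkey : (normEquiv F n).symm ⟨c • v, hcv⟩
          = (Units.mk0 c hc * ((normEquiv F n).symm ⟨v, hv⟩).1,
             ((normEquiv F n).symm ⟨v, hv⟩).2) := by
        rw [Equiv.symm_apply_eq]
        apply Subtype.ext
        symm
        show ((Units.mk0 c hc * ((normEquiv F n).symm ⟨v, hv⟩).1 : Fˣ) : F)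
            • (((normEquiv F n).symm ⟨v, hv⟩).2 : Fin (n + 1) → F) = c • v
        rw [Units.val_mul, Units.val_mk0, mul_smul]
        congr 1
        exact congrArg Subtype.val ((normEquiv F n).apply_symm_apply ⟨v, hv⟩)
      simp only [hytil, dif_neg hcv, dif_neg hv, hkey]
      rw [Units.val_mul, Units.val_mk0, mul_pow]
      ring
  have hclP : ∀ c : F, c ≠ 0 → ∀ v, eval (c • v) P = c ^ k * eval v P := by
    intro c hc v
    rw [hPev', hPev', hcl c hc v]
  have hsupp := support_mod_of_class P hPmem k hclP
  refine ⟨P, ?_, ?_⟩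
  · intro a ha
    rw [mem_admSet]
    have hmod := hsupp a ha
    have hpos : 0 < ∑ j, a j := by
      by_contra hz
      push_neg at hz
      have h0 : ∑ j, a j = 0 := by omega
      rw [h0, Nat.zero_mod] at hmod
      exact hk0 hmod.symm
    have hPmem' := hPmem
    rw [mem_restrictDegree] at hPmem'
    have hbox : ∀ j, a j ≤ r := fun j => hPmem' a ha j
    have hboxsum : ∑ j, a j ≤ (n + 1) * r := by
      calc ∑ j, a j ≤ ∑ _j : Fin (n + 1), r := Finset.sum_le_sum fun j _ => hbox j
        _ = (n + 1) * r := by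
            rw [Finset.sum_const, Finset.card_univ, Fintype.card_fin, smul_eq_mul]
    have hle : ∑ j, a j ≤ dmax := by
      rw [hdmaxd]
      exact deg_le_dmax (by omega) hboxsum hmod (by omega)
    exact ⟨hbox, by rw [hdmax_mod]; exact hmod, hpos, hle⟩
  · funext p
    show eval p.1 P = y p
    rw [hPev']
    have hp1 : p.1 ≠ 0 := isStdRep_ne_zero p.2
    have hkey : (normEquiv F n).symm ⟨p.1, hp1⟩ = (1, p) := by
      rw [Equiv.symm_apply_eq]
      apply Subtype.ext
      symm
      show ((1 : Fˣ) : F) • (p : Fin (n + 1) → F) = p.1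
      rw [Units.val_one, one_smul]
    simp only [hytil, dif_neg hp1, hkey, Units.val_one, one_pow, one_mul]

end PRMAux

namespace PRMAux

open MvPolynomial Finset Module

variable {F : Type*} [Field F] [Fintype F] [DecidableEq F] {n : ℕ}

lemma card_admSet_split (hn : 1 ≤ n) {k : ℕ} (hk1 : 1 ≤ k)
    (hk2 : k ≤ n * (Fintype.card F - 1)) (hk0 : k % (Fintype.card F - 1) ≠ 0) :
    (admSet F n (n * (Fintype.card F - 1) + k % (Fintype.card F - 1))).card
      = (admSet F n k).card + (admSet F n (n * (Fintype.card F - 1) - k)).card := by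
  classical
  have hr1 : 1 ≤ Fintype.card F - 1 := one_le_r
  set r := Fintype.card F - 1 with hr_def
  set k0 := k % r with hk0d
  have hk0r : k0 < r := by rw [hk0d]; exact Nat.mod_lt _ (by omega)
  have hk01 : 1 ≤ k0 := Nat.pos_of_ne_zero hk0
  set l := n * r - k with hl_def
  have hklt : k < n * r := by
    rcases Nat.lt_or_ge k (n * r) with h | h
    · exact h
    · exfalso
      have hke : k = n * r := le_antisymm hk2 h
      apply hk0
      rw [hk0d, hke, Nat.mul_mod_left]
  have hkl : k + l = n * r := by omega
  obtain ⟨qk, hqk⟩ : ∃ q, k = r * q + k0 :=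
    ⟨k / r, by rw [hk0d]; exact (Nat.div_add_mod k r).symm⟩
  have hmlt : qk < n := by
    have hb : n * r = r * n := Nat.mul_comm n r
    have h1 : r * qk < r * n := by omega
    exact Nat.lt_of_mul_lt_mul_left h1
  obtain ⟨m1, hm1⟩ : ∃ m, n = m + qk + 1 := ⟨n - qk - 1, by omega⟩
  have hl_eq : l = m1 * r + (r - k0) := by
    have hy : (m1 + qk + 1) * r = n * r := by rw [← hm1]
    rw [add_mul, add_mul, one_mul] at hy
    have hz : qk * r = r * qk := Nat.mul_comm _ _
    omega
  have hm1_le : m1 ≤ n - 1 := by omega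
  have hl_mod : l % r = r - k0 := by
    rw [hl_eq, add_comm, Nat.add_mul_mod_self_right]
    exact Nat.mod_eq_of_lt (by omega)
  have hl1 : 1 ≤ l := by omega
  set dmax := n * r + k0 with hdmaxd
  have hdmax_mod : dmax % r = k0 := by
    rw [hdmaxd, mul_comm, Nat.mul_add_mod]
    exact Nat.mod_eq_of_lt hk0r
  clear_value r k0 l dmax
  set φ : (Fin (n + 1) →₀ ℕ) → (Fin (n + 1) →₀ ℕ) :=
    fun a => Finsupp.equivFunOnFinite.symm (fun j => r - a j) with hφ
  have hφ_apply : ∀ (a : Fin (n + 1) →₀ ℕ) j, φ a j = r - a j := fun a j => rfl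
  have hφdeg : ∀ a : Fin (n + 1) →₀ ℕ, (∀ j, a j ≤ r) →
      (∑ j, φ a j) + (∑ j, a j) = (n + 1) * r := by
    intro a ha
    rw [← Finset.sum_add_distrib]
    calc ∑ j, (φ a j + a j) = ∑ _j : Fin (n + 1), r :=
          Finset.sum_congr rfl (fun j _ => by rw [hφ_apply]; have := ha j; omega)
      _ = (n + 1) * r := by
          rw [Finset.sum_const, Finset.card_univ, Fintype.card_fin, smul_eq_mul]
  have hφφ : ∀ a : Fin (n + 1) →₀ ℕ, (∀ j, a j ≤ r) → φ (φ a) = a := by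
    intro a ha
    apply Finsupp.ext
    intro j
    rw [hφ_apply, hφ_apply]
    have := ha j
    omega
  have hsucc : (n + 1) * r = n * r + r := by ring
  have hsplit : admSet F n dmax = admSet F n k ∪ (admSet F n l).image φ := by
    ext a
    simp only [Finset.mem_union, Finset.mem_image]
    constructor
    · intro ha
      obtain ⟨hbox, hmod, hpos, hle⟩ := mem_admSet.mp ha
      rw [← hr_def] at hbox hmod
      rw [hdmax_mod] at hmod
      rcases le_or_gt (∑ j, a j) k with hc | hc
      · left
        rw [mem_admSet, ← hr_def]
        exact ⟨hbox, by rw [← hk0d]; exact hmod, hpos, hc⟩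
      · right
        refine ⟨φ a, ?_, hφφ a hbox⟩
        have hphideg := hφdeg a hbox
        have hdvd : r ∣ (∑ j, a j) - k := by
          apply (Nat.modEq_iff_dvd' (le_of_lt hc)).mp
          show k % r = (∑ j, a j) % r
          rw [hmod, hk0d]
        obtain ⟨c, hc_eq⟩ := hdvd
        have hc1 : 1 ≤ c := by
          rcases Nat.eq_zero_or_pos c with rfl | h
          · simp at hc_eq; omega
          · exact h
        have hc' : r * c = r * (c - 1) + r := by
          have hcc : c - 1 + 1 = c := by omega
          calc r * c = r * ((c - 1) + 1) := by rw [hcc]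
            _ = r * (c - 1) + r := by ring
        have hbr : (c - 1) * r = r * (c - 1) := Nat.mul_comm _ _
        have hl2 : l = (∑ j, φ a j) + (c - 1) * r := by omega
        have hmodφ : (∑ j, φ a j) % r = l % r := by
          rw [hl2, Nat.add_mul_mod_self_right]
        rw [mem_admSet, ← hr_def]
        refine ⟨fun j => by rw [hφ_apply]; omega, hmodφ, ?_, ?_⟩
        · by_contra hz
          push_neg at hz
          have h0 : ∑ j, φ a j = 0 := by omega
          rw [h0, Nat.zero_mod, hl_mod] at hmodφ
          omega
        · have hb2 : r * 1 = r := Nat.mul_one r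
          have h3 : r * 1 ≤ r * c := Nat.mul_le_mul_left r hc1
          omega
    · intro h
      rcases h with ha | ⟨b, hb, rfl⟩
      · obtain ⟨hbox, hmod, hpos, hle⟩ := mem_admSet.mp ha
        rw [← hr_def] at hbox hmod
        rw [mem_admSet, ← hr_def]
        refine ⟨hbox, ?_, hpos, by omega⟩
        rw [hdmax_mod, hk0d]
        exact hmod
      · obtain ⟨hbox, hmod, hpos, hle⟩ := mem_admSet.mp hb
        rw [← hr_def] at hbox hmod
        have hphideg := hφdeg b hbox
        have hbmod : (∑ j, b j) % r = r - k0 := by rw [hmod, hl_mod]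
        obtain ⟨u, hu⟩ : ∃ u, ∑ j, b j = r * u + (r - k0) := by
          refine ⟨(∑ j, b j) / r, ?_⟩
          conv_lhs => rw [← Nat.div_add_mod (∑ j, b j) r]
          rw [hbmod]
        have e2 : ∑ j, b j ≤ m1 * r + (r - k0) := by rw [← hl_eq]; exact hle
        have hu_le : u ≤ n - 1 := by
          have hb2 : m1 * r = r * m1 := Nat.mul_comm _ _
          have h2 : r * u ≤ r * m1 := by omega
          have h3 := Nat.le_of_mul_le_mul_left h2 (show 0 < r by omega)
          omega
        obtain ⟨w, hw⟩ : ∃ w, n = w + u + 1 := ⟨n - u - 1, by omega⟩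
        have hy : (w + u + 1) * r = n * r := by rw [← hw]
        rw [add_mul, add_mul, one_mul] at hy
        have hbridge : u * r = r * u := Nat.mul_comm _ _
        have hdphi : ∑ j, φ b j = (w + 1) * r + k0 := by
          have hww : (w + 1) * r = w * r + r := by ring
          omega
        rw [mem_admSet, ← hr_def]
        refine ⟨fun j => by rw [hφ_apply]; omega, ?_, by omega, ?_⟩
        · rw [hdphi, add_comm, Nat.add_mul_mod_self_right, hdmax_mod]
          exact Nat.mod_eq_of_lt hk0r
        · have h4 : (w + 1) * r ≤ n * r := Nat.mul_le_mul_right r (by omega)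
          omega
  have hdisj : Disjoint (admSet F n k) ((admSet F n l).image φ) := by
    rw [Finset.disjoint_left]
    intro a ha hb
    obtain ⟨-, -, -, hle_k⟩ := mem_admSet.mp ha
    obtain ⟨b, hb', rfl⟩ := Finset.mem_image.mp hb
    obtain ⟨hbox, hmod, hpos, hle⟩ := mem_admSet.mp hb'
    rw [← hr_def] at hbox
    have hphideg := hφdeg b hbox
    omega
  have hinj : Set.InjOn φ (admSet F n l) := by
    intro a ha b hb h
    have ha1 : ∀ j, a j ≤ r := by
      have := (mem_admSet.mp (Finset.mem_coe.mp ha)).1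
      rwa [← hr_def] at this
    have hb1 : ∀ j, b j ≤ r := by
      have := (mem_admSet.mp (Finset.mem_coe.mp hb)).1
      rwa [← hr_def] at this
    rw [← hφφ a ha1, ← hφφ b hb1, h]
  rw [hsplit, Finset.card_union_of_disjoint hdisj, Finset.card_image_of_injOn hinj]

end PRMAux

namespace PRMAux

open MvPolynomial Finset Module

variable {F : Type*} [Field F] [Fintype F] [DecidableEq F] {n : ℕ}

lemma finrank_PRM {d : ℕ} (hd : d % (Fintype.card F - 1) ≠ 0) :
    finrank F (PRM F n d) = (admSet F n d).card := by
  rw [PRM_eq_map_W hd, finrank_map_W]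

lemma main_duality (hn : 1 ≤ n) (k : ℕ) (hk1 : 1 ≤ k)
    (hk2 : k ≤ n * (Fintype.card F - 1)) (hkd : ¬ (Fintype.card F - 1) ∣ k) :
    dualCode (PRM F n k) = PRM F n (n * (Fintype.card F - 1) - k) := by
  classical
  have hr1 : 1 ≤ Fintype.card F - 1 := one_le_r
  have hk0 : k % (Fintype.card F - 1) ≠ 0 := fun h => hkd (Nat.dvd_of_mod_eq_zero h)
  have hkl : (n * (Fintype.card F - 1) - k) + k = n * (Fintype.card F - 1) :=
    Nat.sub_add_cancel hk2
  have hl0 : (n * (Fintype.card F - 1) - k) % (Fintype.card F - 1) ≠ 0 := by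
    intro h
    have hdl : (Fintype.card F - 1) ∣ (n * (Fintype.card F - 1) - k) :=
      Nat.dvd_of_mod_eq_zero h
    have hdk : (Fintype.card F - 1) ∣ k := by
      have hrw : k = n * (Fintype.card F - 1) - (n * (Fintype.card F - 1) - k) := by omega
      rw [hrw]
      exact Nat.dvd_sub (Dvd.intro n (Nat.mul_comm _ _)) hdl
    exact hkd hdk
  have hincl : PRM F n (n * (Fintype.card F - 1) - k) ≤ dualCode (PRM F n k) :=
    PRM_le_dualCode hn hkl
  have h1 : finrank F (PRM F n k) = (admSet F n k).card := finrank_PRM hk0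
  have h2 : finrank F (PRM F n (n * (Fintype.card F - 1) - k))
      = (admSet F n (n * (Fintype.card F - 1) - k)).card := finrank_PRM hl0
  have h3 : finrank F (ProjPts F n → F)
      = (admSet F n (n * (Fintype.card F - 1) + k % (Fintype.card F - 1))).card := by
    rw [← finrank_map_W (F := F) (n := n)
      (n * (Fintype.card F - 1) + k % (Fintype.card F - 1)),
      map_W_dmax_eq_top hk0, finrank_top]
  have h4 := card_admSet_split hn hk1 hk2 hk0
  have h5 := finrank_dualCode (PRM F n k)
  have hd : finrank F (dualCode (PRM F n k))
      = finrank F (PRM F n (n * (Fintype.card F - 1) - k)) := by omega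
  exact (Submodule.eq_of_le_of_finrank_le hincl (le_of_eq hd)).symm

end PRMAux


theorem stmt5 (q n : ℕ) (F : Type*) [Field F] [Fintype F] [DecidableEq F]
    (hq : Fintype.card F = q) (hn : 1 ≤ n) (k : ℕ) (hk1 : 1 ≤ k) (hk2 : k ≤ n * (q - 1))
    (hkd : ¬ (q - 1) ∣ k) :
    dualCode (PRM F n k) = PRM F n (n * (q - 1) - k) := by
  subst hq
  exact PRMAux.main_duality hn k hk1 hk2 hkd
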